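/- Every hyperbolic matrix A ∈ SL(2,ℤ) (i.e., with |tr A| > 2) is conjugate in GL(2,ℤ) to a matrix of the form ε·B, where ε ∈ {1,−1} and B is an integer matrix of determinant 1 all of whose entries are nonnegative. -/

import Mathlib

private lemma exists_near_pos (x c : ℤ) (hc : 0 < c) : ∃ k : ℤ, |x - 2 * k * c| ≤ |c| := by
  have h2c : (0:ℤ) < 2*c := by omega
  have hr0 : 0 ≤ x % (2*c) := Int.emod_nonneg x (by omega)
  have hr1 : x % (2*c) < 2*c := Int.emod_lt_of_pos x h2c
  have hdiv : 2*c*(x/(2*c)) + x % (2*c) = x := Int.mul_ediv_add_emod x (2*c)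
  rcases le_or_gt (x % (2*c)) c with h | h
  · refine ⟨x/(2*c), ?_⟩
    have he : x - 2*(x/(2*c))*c = x % (2*c) := by linear_combination -hdiv
    rw [he, abs_of_nonneg hr0, abs_of_pos hc]; exact h
  · refine ⟨x/(2*c) + 1, ?_⟩
    have he : x - 2*(x/(2*c)+1)*c = x % (2*c) - 2*c := by linear_combination -hdiv
    rw [he, abs_of_nonpos (by omega), abs_of_pos hc]; omega

private lemma exists_near (x c : ℤ) (hc : c ≠ 0) : ∃ k : ℤ, |x - 2 * k * c| ≤ |c| := by
  rcases lt_or_gt_of_ne hc with h | h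
  · obtain ⟨k, hk⟩ := exists_near_pos x (-c) (by omega)
    refine ⟨-k, ?_⟩
    have h1 : x - 2 * (-k) * c = x - 2 * k * (-c) := by ring
    have h2 : |(-c)| = |c| := abs_neg c
    rw [h1]; rw [h2] at hk; exact hk
  · exact exists_near_pos x c h

private lemma comp_conj {P₁ P₂ M M' M'' : Matrix (Fin 2) (Fin 2) ℤ}
    (h1 : P₁ * M = M' * P₁) (h2 : P₂ * M' = M'' * P₂) :
    (P₂ * P₁) * M = M'' * (P₂ * P₁) := by
  rw [mul_assoc, h1, ← mul_assoc, h2, mul_assoc]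

/-- the easy case: `b*c > 0`. -/
private lemma good_case (a b c d : ℤ) (hdet : a * d - b * c = 1) (ht : 3 ≤ a + d)
    (hbc : 0 < b * c) :
    ∃ (P : Matrix (Fin 2) (Fin 2) ℤ) (a' b' c' d' : ℤ),
      (P.det = 1 ∨ P.det = -1) ∧ 0 ≤ a' ∧ 0 ≤ b' ∧ 0 ≤ c' ∧ 0 ≤ d' ∧
      a' * d' - b' * c' = 1 ∧ P * !![a, b; c, d] = !![a', b'; c', d'] * P := by
  have hbc1 : 1 ≤ b * c := hbc
  have had : 2 ≤ a * d := by linarith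
  have ha : 0 < a := by
    by_contra h
    push_neg at h
    have hd : 0 ≤ d := by linarith
    have : a * d ≤ 0 := mul_nonpos_of_nonpos_of_nonneg h hd
    linarith
  have hd : 0 < d := by
    by_contra h
    push_neg at h
    have : a * d ≤ 0 := mul_nonpos_of_nonneg_of_nonpos ha.le h
    linarith
  rcases lt_or_ge 0 b with hb | hb
  · have hc : 0 < c := by
      by_contra h
      push_neg at h
      have : b * c ≤ 0 := mul_nonpos_of_nonneg_of_nonpos hb.le h
      linarith
    exact ⟨1, a, b, c, d, Or.inl Matrix.det_one, ha.le, hb.le, hc.le, hd.le, hdet,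
      by rw [one_mul, mul_one]⟩
  · have hb' : b < 0 := by
      rcases lt_or_eq_of_le hb with h | h
      · exact h
      · exfalso; rw [h, zero_mul] at hbc; exact lt_irrefl 0 hbc
    have hc : c < 0 := by
      by_contra h
      push_neg at h
      have : b * c ≤ 0 := mul_nonpos_of_nonpos_of_nonneg hb'.le h
      linarith
    refine ⟨!![1, 0; 0, -1], a, -b, -c, d, Or.inr (by simp [Matrix.det_fin_two_of]),
      ha.le, by omega, by omega, hd.le, by linear_combination hdet, ?_⟩
    ext i j
    fin_cases i <;> fin_cases j <;>
      simp [Matrix.mul_apply, Fin.sum_univ_two] <;> ring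

/-- Descent on `|c|` : any matrix with `det = 1`, trace `≥ 3` and `b*c < 0`
is conjugate in `GL(2,ℤ)` to a nonnegative matrix. -/
private lemma core : ∀ n : ℕ, ∀ a b c d : ℤ, a * d - b * c = 1 → 3 ≤ a + d → b * c < 0 →
    c.natAbs ≤ n →
    ∃ (P : Matrix (Fin 2) (Fin 2) ℤ) (a' b' c' d' : ℤ),
      (P.det = 1 ∨ P.det = -1) ∧ 0 ≤ a' ∧ 0 ≤ b' ∧ 0 ≤ c' ∧ 0 ≤ d' ∧
      a' * d' - b' * c' = 1 ∧ P * !![a, b; c, d] = !![a', b'; c', d'] * P := by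
  intro n
  induction n with
  | zero =>
    intro a b c d hdet ht hbc hcn
    exfalso
    have hc : c = 0 := by omega
    rw [hc, mul_zero] at hbc
    exact lt_irrefl 0 hbc
  | succ n ih =>
    intro a b c d hdet ht hbc hcn
    have hc : c ≠ 0 := by
      intro h; rw [h, mul_zero] at hbc; exact lt_irrefl 0 hbc
    obtain ⟨k, hk⟩ := exists_near (d - a) c hc
    have hdet' : (a + k*c) * (d - k*c) - (b + k*(d-a) - k^2*c) * c = 1 := by
      linear_combination hdet
    have hP1 : (!![1,k;0,1] : Matrix (Fin 2) (Fin 2) ℤ) * !![a,b;c,d]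
        = !![a+k*c, b+k*(d-a)-k^2*c; c, d-k*c] * !![1,k;0,1] := by
      ext i j
      fin_cases i <;> fin_cases j <;>
        simp [Matrix.mul_apply, Fin.sum_univ_two] <;> ring
    have h4 : 4*((b+k*(d-a)-k^2*c) * c) = (a+d)^2 - 4 - (d - a - 2*k*c)^2 := by
      linear_combination -4*hdet
    have hq2 : (d - a - 2*k*c)^2 ≤ c^2 := by
      have h1 := abs_le.mp hk
      nlinarith [h1.1, h1.2, sq_abs c, abs_nonneg c]
    have ht9 : 9 ≤ (a+d)^2 := by nlinarith
    rcases lt_or_ge ((d - a - 2*k*c)^2) ((a+d)^2 - 4) with hgood | hbad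
    · -- good case: b'*c > 0
      have hb'c : 0 < (b+k*(d-a)-k^2*c) * c := by linarith
      obtain ⟨P₂, a'', b'', c'', d'', hP2d, h1, h2, h3, h4', hdet'', hP2⟩ :=
        good_case (a+k*c) (b+k*(d-a)-k^2*c) c (d-k*c) hdet' (by linarith) hb'c
      refine ⟨P₂ * !![1,k;0,1], a'', b'', c'', d'', ?_, h1, h2, h3, h4', hdet'',
        comp_conj hP1 hP2⟩
      have hTdet : (!![1,k;0,1] : Matrix (Fin 2) (Fin 2) ℤ).det = 1 := by
        simp [Matrix.det_fin_two_of]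
      rcases hP2d with h | h
      · left; rw [Matrix.det_mul, h, hTdet]; ring
      · right; rw [Matrix.det_mul, h, hTdet]; ring
    · -- bad case: descent
      have hb'c_ne : (b+k*(d-a)-k^2*c) * c ≠ 0 := by
        intro h0
        have had1 : (a + k*c) * (d - k*c) = 1 := by linear_combination hdet' + h0
        rcases Int.isUnit_iff.mp (IsUnit.of_mul_eq_one _ had1) with h1 | h1
        · rw [h1, one_mul] at had1; linarith
        · rw [h1] at had1
          have : d - k*c = -1 := by linarith
          linarith
      have hb'c_neg : (b+k*(d-a)-k^2*c) * c < 0 :=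
        lt_of_le_of_ne (by linarith) hb'c_ne
      have habs : |(b+k*(d-a)-k^2*c)| * |c| = -((b+k*(d-a)-k^2*c) * c) := by
        rw [← abs_mul, abs_of_neg hb'c_neg]
      have hcc : |c| * |c| = c^2 := by rw [← abs_mul, sq, abs_of_nonneg (mul_self_nonneg c)]
      have hlt4 : 4 * (|(b+k*(d-a)-k^2*c)| * |c|) < |c| * |c| := by
        rw [habs, hcc]; linarith
      have hcpos : 0 < |c| := abs_pos.mpr hc
      have hlt : |(b+k*(d-a)-k^2*c)| < |c| := by nlinarith [abs_nonneg (b+k*(d-a)-k^2*c)]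
      have hnat : (b+k*(d-a)-k^2*c).natAbs < c.natAbs := by
        rw [Int.abs_eq_natAbs, Int.abs_eq_natAbs] at hlt; exact_mod_cast hlt
      have hS : (!![0,-1;1,0] : Matrix (Fin 2) (Fin 2) ℤ)
            * !![a+k*c, b+k*(d-a)-k^2*c; c, d-k*c]
          = !![d-k*c, -c; -(b+k*(d-a)-k^2*c), a+k*c] * !![0,-1;1,0] := by
        ext i j
        fin_cases i <;> fin_cases j <;>
          simp [Matrix.mul_apply, Fin.sum_univ_two] <;> ring
      obtain ⟨P₃, a'', b'', c'', d'', hP3d, h1, h2, h3, h4', hdet'', hP3⟩ :=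
        ih (d-k*c) (-c) (-(b+k*(d-a)-k^2*c)) (a+k*c)
          (by linear_combination hdet)
          (by linarith)
          (by linarith [show (-c) * (-(b+k*(d-a)-k^2*c)) = (b+k*(d-a)-k^2*c) * c from by ring])
          (by rw [Int.natAbs_neg]; omega)
      refine ⟨P₃ * (!![0,-1;1,0] * !![1,k;0,1]), a'', b'', c'', d'', ?_, h1, h2, h3, h4',
        hdet'', ?_⟩
      · have hTdet : (!![1,k;0,1] : Matrix (Fin 2) (Fin 2) ℤ).det = 1 := by
          simp [Matrix.det_fin_two_of]
        have hSdet : (!![0,-1;1,0] : Matrix (Fin 2) (Fin 2) ℤ).det = 1 := by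
          simp [Matrix.det_fin_two_of]
        rcases hP3d with h | h
        · left; rw [Matrix.det_mul, Matrix.det_mul, h, hTdet, hSdet]; ring
        · right; rw [Matrix.det_mul, Matrix.det_mul, h, hTdet, hSdet]; ring
      · exact comp_conj (comp_conj hP1 hS) hP3

/-- Main reduction: any integer matrix with determinant 1 and trace `≥ 3` is conjugate
in `GL(2,ℤ)` to a nonnegative matrix. -/
private lemma main_reduce (a b c d : ℤ) (hdet : a * d - b * c = 1) (ht : 3 ≤ a + d) :
    ∃ (P : Matrix (Fin 2) (Fin 2) ℤ) (a' b' c' d' : ℤ),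
      (P.det = 1 ∨ P.det = -1) ∧ 0 ≤ a' ∧ 0 ≤ b' ∧ 0 ≤ c' ∧ 0 ≤ d' ∧
      a' * d' - b' * c' = 1 ∧ P * !![a, b; c, d] = !![a', b'; c', d'] * P := by
  rcases lt_trichotomy (b * c) 0 with hbc | hbc | hbc
  · exact core c.natAbs a b c d hdet ht hbc le_rfl
  · exfalso
    have had : a * d = 1 := by linear_combination hdet + hbc
    rcases Int.isUnit_iff.mp (IsUnit.of_mul_eq_one _ had) with h | h
    · rw [h, one_mul] at had; rw [h] at ht; linarith
    · rw [h] at had ht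
      have : d = -1 := by linarith
      linarith
  · exact good_case a b c d hdet ht hbc

/-- Every hyperbolic matrix `A ∈ SL(2,ℤ)` (i.e. `|tr A| > 2`) is conjugate in `GL(2,ℤ)`
to a matrix of the form `ε·B`, where `ε ∈ {1,−1}` and `B` is an integer matrix of
determinant `1` all of whose entries are nonnegative. -/
theorem hyperbolic_conjugate_nonneg (A : Matrix.SpecialLinearGroup (Fin 2) ℤ)
    (hA : 2 < |Matrix.trace (A : Matrix (Fin 2) (Fin 2) ℤ)|) :
    ∃ (P : Matrix (Fin 2) (Fin 2) ℤ) (ε : ℤ) (B : Matrix (Fin 2) (Fin 2) ℤ),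
      (P.det = 1 ∨ P.det = -1) ∧ (ε = 1 ∨ ε = -1) ∧ B.det = 1 ∧
      (∀ i j, 0 ≤ B i j) ∧
      P * (A : Matrix (Fin 2) (Fin 2) ℤ) * P⁻¹ = ε • B := by
  set N : Matrix (Fin 2) (Fin 2) ℤ := (A : Matrix (Fin 2) (Fin 2) ℤ) with hN
  have hdetN : N.det = 1 := A.prop
  have hNeta : N = !![N 0 0, N 0 1; N 1 0, N 1 1] := Matrix.eta_fin_two N
  have hdet : N 0 0 * N 1 1 - N 0 1 * N 1 0 = 1 := by
    rw [← Matrix.det_fin_two]; exact hdetN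
  have htr : Matrix.trace N = N 0 0 + N 1 1 := Matrix.trace_fin_two N
  rw [htr] at hA
  rcases lt_abs.mp hA with h | h
  · -- trace ≥ 3
    obtain ⟨P, a', b', c', d', hPd, h1, h2, h3, h4, hdet', hP⟩ :=
      main_reduce (N 0 0) (N 0 1) (N 1 0) (N 1 1) hdet (by omega)
    refine ⟨P, 1, !![a', b'; c', d'], hPd, Or.inl rfl,
      by rw [Matrix.det_fin_two_of]; exact hdet', ?_, ?_⟩
    · intro i j
      fin_cases i <;> fin_cases j <;> simp <;> assumption
    · have hu : IsUnit P.det := IsUnit.of_mul_eq_one P.det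
        (by rcases hPd with hh | hh <;> rw [hh] <;> ring)
      have hPN : P * N = !![a', b'; c', d'] * P := by
        nth_rewrite 1 [hNeta]; exact hP
      rw [one_smul, hPN, mul_assoc, Matrix.mul_nonsing_inv P hu, mul_one]
  · -- trace ≤ -3
    obtain ⟨P, a', b', c', d', hPd, h1, h2, h3, h4, hdet', hP⟩ :=
      main_reduce (-(N 0 0)) (-(N 0 1)) (-(N 1 0)) (-(N 1 1))
        (by linear_combination hdet) (by omega)
    refine ⟨P, -1, !![a', b'; c', d'], hPd, Or.inr rfl,
      by rw [Matrix.det_fin_two_of]; exact hdet', ?_, ?_⟩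
    · intro i j
      fin_cases i <;> fin_cases j <;> simp <;> assumption
    · have hu : IsUnit P.det := IsUnit.of_mul_eq_one P.det
        (by rcases hPd with hh | hh <;> rw [hh] <;> ring)
      have hnegN : (-N) = !![-(N 0 0), -(N 0 1); -(N 1 0), -(N 1 1)] := by
        ext i j; fin_cases i <;> fin_cases j <;> simp
      have h5 : P * (-N) = !![a', b'; c', d'] * P := by rw [hnegN]; exact hP
      rw [mul_neg] at h5
      have hPN : P * N = (-!![a', b'; c', d']) * P := by
        rw [neg_mul]; exact neg_eq_iff_eq_neg.mp h5
      rw [hPN, mul_assoc, Matrix.mul_nonsing_inv P hu, mul_one, neg_smul, one_smul]
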